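/- Let M' : Fin 2 → Matrix (Fin 3) (Fin 3) ℚ be given by M' 0 = (1/3)·![![1,0,0],![0,2,0],![0,0,1]] and M' 1 = (1/3)·![![1,0,0],![0,2,1],![0,0,1]]. Then for every c : ℚ, every e : ℕ and every binary word w : List (Fin 2), applying the matrices M' d for the successive digits d of w (in order, leftmost first) to the vector ![c, (e : ℚ), 1] yields ((1/3 : ℚ)^w.length) • ![c, ((encFrom e w : ℕ) : ℚ), 1], where encFrom e w = w.foldl (fun acc d => 2 * acc + (d : ℕ)) e. Formally: w.foldl (fun v d => (M' d).mulVec v) ![c, (e : ℚ), 1] = ((1/3 : ℚ)^w.length) • ![c, ((encFrom e w : ℕ) : ℚ), 1]. -/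

import Mathlib

/-- Value of the binary word `w` in base 2 (most significant digit first),
starting from the value `e`. -/
def encFrom (e : ℕ) (w : List (Fin 2)) : ℕ :=
  w.foldl (fun acc d => 2 * acc + (d : ℕ)) e

/-- The outcome-1 operation elements of the superoperators `ℰ'_a` and `ℰ'_b`. -/
def M' : Fin 2 → Matrix (Fin 3) (Fin 3) ℚ :=
  ![(1/3 : ℚ) • !![1, 0, 0; 0, 2, 0; 0, 0, 1],
    (1/3 : ℚ) • !![1, 0, 0; 0, 2, 1; 0, 0, 1]]

lemma foldl_smul (s : ℚ) (v : Fin 3 → ℚ) (w : List (Fin 2)) :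
    w.foldl (fun v d => (M' d).mulVec v) (s • v) =
      s • w.foldl (fun v d => (M' d).mulVec v) v := by
  induction w generalizing v with
  | nil => rfl
  | cons d t ih =>
    simp only [List.foldl_cons, Matrix.mulVec_smul, ih]

lemma step (c : ℚ) (e : ℚ) (d : Fin 2) :
    (M' d).mulVec ![c, e, 1] = (1/3 : ℚ) • ![c, 2 * e + (d : ℕ), 1] := by
  fin_cases d <;>
    · simp [M', Matrix.smul_mulVec]
      funext i
      fin_cases i <;>
        simp [Matrix.mulVec, dotProduct, Fin.sum_univ_three] <;> ring

theorem encode_second_amplitude (c : ℚ) (e : ℕ) (w : List (Fin 2)) :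
    w.foldl (fun v d => (M' d).mulVec v) ![c, (e : ℚ), 1] =
      ((1/3 : ℚ) ^ w.length) • ![c, ((encFrom e w : ℕ) : ℚ), 1] := by
  induction w generalizing e with
  | nil => simp [encFrom]
  | cons d t ih =>
    rw [List.foldl_cons, step, foldl_smul]
    have : ((2 * e + (d : ℕ) : ℕ) : ℚ) = 2 * (e : ℚ) + (d : ℕ) := by push_cast; ring
    rw [← this, ih]
    simp [encFrom, smul_smul, pow_succ]
    exact ⟨by ring, by ring, by ring⟩
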